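/- Let M, C ≥ 0, q ≥ 1 a real number, and Δ ∈ (0, 1]. Let h : ℝ → ℝ be twice continuously differentiable with |h(y)|, |h'(y)|, |h''(y)| ≤ M for all y, and let u be the Δ-sliding average of h. Let v : ℝ → ℝ be three times continuously differentiable with |v(y)|, |v'(y)|, |v''(y)|, |v'''(y)| ≤ M for all y. Fix y₀ ∈ ℝ and suppose û₊, û₋, ṽ₊, ṽ₋ ∈ ℝ satisfy |û₊ − h(y₀ + Δ/2)| ≤ C·Δ³, |û₋ − h(y₀ − Δ/2)| ≤ C·Δ³, |ṽ₊ − v(y₀ + Δ/2)| ≤ C·Δ^q, and |ṽ₋ − v(y₀ − Δ/2)| ≤ C·Δ^q. Then there is a constant K depending only on M and C such that |(ṽ₊·û₊ − ṽ₋·û₋)/Δ − (u'(y₀)·v(y₀) + u(y₀)·v'(y₀))| ≤ K·(Δ² + Δ^{q−1}). -/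

import Mathlib

set_option maxHeartbeats 1000000

lemma mvt_abs (f : ℝ → ℝ) (hf : Differentiable ℝ f) {M : ℝ}
    (hM : ∀ x, |deriv f x| ≤ M) (a b : ℝ) : |f b - f a| ≤ M * |b - a| := by
  have := convex_univ.norm_image_sub_le_of_norm_deriv_le
    (fun x _ => (hf x)) (fun x _ => hM x) (Set.mem_univ a) (Set.mem_univ b)
  simpa [Real.norm_eq_abs] using this

lemma abs_sub_le_of_uIcc {a t x : ℝ} (hx : x ∈ Set.uIcc a (a + t)) : |x - a| ≤ |t| := by
  have h1 := le_abs_self t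
  have h2 := neg_abs_le t
  rcases Set.mem_uIcc.mp hx with ⟨u1, u2⟩ | ⟨u1, u2⟩ <;> (rw [abs_le]; constructor <;> linarith)

lemma taylor1_abs (f : ℝ → ℝ) (hf : Differentiable ℝ f) (hf' : Differentiable ℝ (deriv f))
    {M : ℝ} (hM : ∀ x, |deriv (deriv f) x| ≤ M) (a t : ℝ) :
    |f (a + t) - f a - t * deriv f a| ≤ M * t ^ 2 := by
  have hM0 : 0 ≤ M := le_trans (abs_nonneg _) (hM a)
  set g : ℝ → ℝ := fun x => f x - f a - (x - a) * deriv f a with hg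
  have hgd : ∀ x, HasDerivAt g (deriv f x - deriv f a) x := by
    intro x
    have h1 : HasDerivAt (fun x => f x - f a) (deriv f x) x :=
      ((hf x).hasDerivAt).sub_const _
    have h2 : HasDerivAt (fun x => (x - a) * deriv f a) (deriv f a) x := by
      simpa using ((hasDerivAt_id x).sub_const a).mul_const (deriv f a)
    exact h1.sub h2
  have hb : ∀ x ∈ Set.uIcc a (a + t), ‖deriv g x‖ ≤ M * |t| := by
    intro x hx
    rw [(hgd x).deriv]
    calc ‖deriv f x - deriv f a‖ = |deriv f x - deriv f a| := rfl
      _ ≤ M * |x - a| := mvt_abs (deriv f) hf' hM a x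
      _ ≤ M * |t| := by exact mul_le_mul_of_nonneg_left (abs_sub_le_of_uIcc hx) hM0
  have := (convex_uIcc a (a + t)).norm_image_sub_le_of_norm_deriv_le
    (fun x _ => (hgd x).differentiableAt) hb (Set.left_mem_uIcc) (Set.right_mem_uIcc)
  have hga : g a = 0 := by simp [hg]
  have hgt : g (a + t) = f (a + t) - f a - t * deriv f a := by simp [hg]
  rw [hga, hgt, sub_zero, Real.norm_eq_abs, Real.norm_eq_abs] at this
  calc |f (a + t) - f a - t * deriv f a| ≤ M * |t| * |a + t - a| := this
    _ = M * t ^ 2 := by rw [show a + t - a = t by ring, mul_assoc, ← abs_mul]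
                        rw [show t * t = t ^ 2 by ring, abs_of_nonneg (sq_nonneg t)]

lemma taylor2_abs (f : ℝ → ℝ) (hf : Differentiable ℝ f) (hf' : Differentiable ℝ (deriv f))
    (hf'' : Differentiable ℝ (deriv (deriv f)))
    {M : ℝ} (hM : ∀ x, |deriv (deriv (deriv f)) x| ≤ M) (a t : ℝ) :
    |f (a + t) - f a - t * deriv f a - t ^ 2 / 2 * deriv (deriv f) a| ≤ M * t ^ 2 * |t| := by
  have hM0 : 0 ≤ M := le_trans (abs_nonneg _) (hM a)
  set c1 := deriv f a
  set c2 := deriv (deriv f) a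
  set g : ℝ → ℝ := fun x => f x - f a - (x - a) * c1 - (x - a) ^ 2 / 2 * c2 with hg
  have hgd : ∀ x, HasDerivAt g (deriv f x - c1 - (x - a) * c2) x := by
    intro x
    have h1 : HasDerivAt (fun x => f x - f a) (deriv f x) x := ((hf x).hasDerivAt).sub_const _
    have h2 : HasDerivAt (fun x => (x - a) * c1) c1 x := by
      simpa using ((hasDerivAt_id x).sub_const a).mul_const c1
    have h3 : HasDerivAt (fun x => (x - a) ^ 2 / 2 * c2) ((x - a) * c2) x := by
      have := (((hasDerivAt_id x).sub_const a).pow 2).div_const 2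
      have := this.mul_const c2
      refine this.congr_deriv ?_
      simp [id]
    exact (h1.sub h2).sub h3
  have hb : ∀ x ∈ Set.uIcc a (a + t), ‖deriv g x‖ ≤ M * t ^ 2 := by
    intro x hx
    rw [(hgd x).deriv]
    have h1 : |deriv f (a + (x - a)) - deriv f a - (x - a) * deriv (deriv f) a| ≤ M * (x - a) ^ 2 :=
      taylor1_abs (deriv f) hf' hf'' hM a (x - a)
    rw [show a + (x - a) = x by ring] at h1
    calc ‖deriv f x - c1 - (x - a) * c2‖ = |deriv f x - c1 - (x - a) * c2| := rfl
      _ ≤ M * (x - a) ^ 2 := h1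
      _ ≤ M * t ^ 2 := by
          have := abs_sub_le_of_uIcc hx
          have h2 : (x - a) ^ 2 ≤ t ^ 2 := by
            rw [← sq_abs (x - a), ← sq_abs t]
            exact pow_le_pow_left₀ (abs_nonneg _) this 2
          exact mul_le_mul_of_nonneg_left h2 hM0
  have := (convex_uIcc a (a + t)).norm_image_sub_le_of_norm_deriv_le
    (fun x _ => (hgd x).differentiableAt) hb (Set.left_mem_uIcc) (Set.right_mem_uIcc)
  have hga : g a = 0 := by simp [hg]
  have hgt : g (a + t) = f (a + t) - f a - t * c1 - t ^ 2 / 2 * c2 := by simp [hg]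
  rw [hga, hgt, sub_zero, Real.norm_eq_abs, Real.norm_eq_abs,
    show a + t - a = t by ring] at this
  exact this

lemma avg_near (h : ℝ → ℝ) (hc : Continuous h) (hf : Differentiable ℝ h)
    (hf' : Differentiable ℝ (deriv h))
    {M : ℝ} (hM : ∀ x, |deriv (deriv h) x| ≤ M) (y₀ δ : ℝ) (hδ : 0 ≤ δ) :
    |(∫ s in (y₀ - δ)..(y₀ + δ), h s) - (2 * δ) * h y₀| ≤ M * δ ^ 2 * (2 * δ) := by
  have hM0 : 0 ≤ M := le_trans (abs_nonneg _) (hM y₀)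
  set c := deriv h y₀
  have hi1 : IntervalIntegrable h MeasureTheory.volume (y₀ - δ) (y₀ + δ) :=
    hc.intervalIntegrable _ _
  have hi2 : IntervalIntegrable (fun s => h y₀ + (s - y₀) * c) MeasureTheory.volume
      (y₀ - δ) (y₀ + δ) := (by continuity : Continuous fun s => h y₀ + (s - y₀) * c).intervalIntegrable _ _
  have hlin : (∫ s in (y₀ - δ)..(y₀ + δ), (h y₀ + (s - y₀) * c)) = (2 * δ) * h y₀ := by
    rw [intervalIntegral.integral_add (by apply intervalIntegrable_const)
      ((by continuity : Continuous fun s => (s - y₀) * c).intervalIntegrable _ _)]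
    rw [intervalIntegral.integral_const]
    have : (∫ s in (y₀ - δ)..(y₀ + δ), (s - y₀) * c) = 0 := by
      rw [intervalIntegral.integral_mul_const]
      have := intervalIntegral.integral_comp_sub_right (fun x => x) y₀ (a := y₀ - δ) (b := y₀ + δ)
      rw [this]
      simp [integral_id]
    rw [this, smul_eq_mul]
    ring
  have key : (∫ s in (y₀ - δ)..(y₀ + δ), h s) - (2 * δ) * h y₀
      = ∫ s in (y₀ - δ)..(y₀ + δ), (h s - (h y₀ + (s - y₀) * c)) := by
    rw [intervalIntegral.integral_sub hi1 hi2, hlin]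
  rw [key]
  have hb : ∀ s ∈ Set.uIoc (y₀ - δ) (y₀ + δ), ‖h s - (h y₀ + (s - y₀) * c)‖ ≤ M * δ ^ 2 := by
    intro s hs
    rw [Set.uIoc_of_le (by linarith)] at hs
    obtain ⟨hs1, hs2⟩ := hs
    have h1 : |h (y₀ + (s - y₀)) - h y₀ - (s - y₀) * c| ≤ M * (s - y₀) ^ 2 :=
      taylor1_abs h hf hf' hM y₀ (s - y₀)
    rw [show y₀ + (s - y₀) = s by ring] at h1
    have h2 : (s - y₀) ^ 2 ≤ δ ^ 2 := by nlinarith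
    calc ‖h s - (h y₀ + (s - y₀) * c)‖ = |h s - h y₀ - (s - y₀) * c| := by rw [Real.norm_eq_abs]; ring_nf
      _ ≤ M * (s - y₀) ^ 2 := h1
      _ ≤ M * δ ^ 2 := by nlinarith
  have := intervalIntegral.norm_integral_le_of_norm_le_const hb
  have h2d : |y₀ + δ - (y₀ - δ)| = 2 * δ := by
    rw [show y₀ + δ - (y₀ - δ) = 2 * δ by ring]; exact abs_of_nonneg (by linarith)
  rw [Real.norm_eq_abs, h2d] at this
  exact this

lemma abs_sub' (a b : ℝ) : |a - b| ≤ |a| + |b| := by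
  simpa [sub_eq_add_neg] using abs_add_le a (-b)

lemma abs_add5 (a b c d e : ℝ) : |a - b + c + d + e| ≤ |a| + |b| + |c| + |d| + |e| := by
  calc |a - b + c + d + e| ≤ |a - b + c + d| + |e| := abs_add_le _ _
    _ ≤ |a - b + c| + |d| + |e| := by linarith [abs_add_le (a - b + c) d]
    _ ≤ |a - b| + |c| + |d| + |e| := by linarith [abs_add_le (a - b) c]
    _ ≤ |a| + |b| + |c| + |d| + |e| := by linarith [abs_sub' a b]

/-- (Generalization of Theorem 2.2 of the paper.) Let `M, C ≥ 0`.
There is a constant `K`, depending only on `M` and `C`, such that for every real `q ≥ 1`,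
all `Δ ∈ (0,1]`, all `h : ℝ → ℝ` twice continuously differentiable with
`|h|, |h'|, |h''| ≤ M` (whose `Δ`-sliding average is `u`), all `v : ℝ → ℝ` thrice
continuously differentiable with `|v|, |v'|, |v''|, |v'''| ≤ M`, every `y₀`, and all
values `û₊, û₋` accurate to `C·Δ³` and `ṽ₊, ṽ₋` accurate to `C·Δ^q`, one has
`|(ṽ₊û₊ − ṽ₋û₋)/Δ − (u'(y₀)v(y₀) + u(y₀)v'(y₀))| ≤ K·(Δ² + Δ^(q−1))`. -/
theorem staggered_weno_low_order_interp (M C : ℝ) (hM : 0 ≤ M) (hC : 0 ≤ C) :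
    ∃ K : ℝ, ∀ (q : ℝ), 1 ≤ q → ∀ (Δ : ℝ), 0 < Δ → Δ ≤ 1 →
      ∀ (h v : ℝ → ℝ), ContDiff ℝ 2 h →
        (∀ y, |h y| ≤ M) → (∀ y, |deriv h y| ≤ M) → (∀ y, |iteratedDeriv 2 h y| ≤ M) →
        ContDiff ℝ 3 v →
        (∀ y, |v y| ≤ M) → (∀ y, |deriv v y| ≤ M) →
        (∀ y, |iteratedDeriv 2 v y| ≤ M) → (∀ y, |iteratedDeriv 3 v y| ≤ M) →
        ∀ (y₀ uhatP uhatM vtilP vtilM : ℝ),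
          |uhatP - h (y₀ + Δ / 2)| ≤ C * Δ ^ 3 →
          |uhatM - h (y₀ - Δ / 2)| ≤ C * Δ ^ 3 →
          |vtilP - v (y₀ + Δ / 2)| ≤ C * Δ ^ q →
          |vtilM - v (y₀ - Δ / 2)| ≤ C * Δ ^ q →
          |(vtilP * uhatP - vtilM * uhatM) / Δ -
              ((h (y₀ + Δ / 2) - h (y₀ - Δ / 2)) / Δ * v y₀ +
                ((1 / Δ) * ∫ s in (y₀ - Δ / 2)..(y₀ + Δ / 2), h s) * deriv v y₀)| ≤
            K * (Δ ^ 2 + Δ ^ (q - 1)) := by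
  refine ⟨2 * (M + C) * C + 2 * C * M + M ^ 2, ?_⟩
  intro q hq Δ hΔ hΔ1 h v hh hh0 hh1 hh2 hv hv0 hv1 hv2 hv3 y₀ uhatP uhatM vtilP vtilM eP eM fP fM
  have hΔ0 : Δ ≠ 0 := ne_of_gt hΔ
  -- differentiability facts
  have hhd : Differentiable ℝ h := hh.differentiable (by norm_num)
  have hhd1 : Differentiable ℝ (deriv h) := by
    have h2 : ContDiff ℝ (1+1) h := by norm_num; exact hh
    exact (contDiff_succ_iff_deriv.mp h2).2.2.differentiable one_ne_zero
  have hvd : Differentiable ℝ v := hv.differentiable (by norm_num)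
  have hvcd : ContDiff ℝ (1+1) (deriv v) := by
    have h2 : ContDiff ℝ (2+1) v := by norm_num; exact hv
    have := (contDiff_succ_iff_deriv.mp h2).2.2
    norm_num at this ⊢; exact this
  have hvd1 : Differentiable ℝ (deriv v) := hvcd.differentiable (by norm_num)
  have hvd2 : Differentiable ℝ (deriv (deriv v)) :=
    (contDiff_succ_iff_deriv.mp hvcd).2.2.differentiable one_ne_zero
  have hh2' : ∀ y, |deriv (deriv h) y| ≤ M := by
    intro y; have := hh2 y
    rwa [show (2:ℕ) = 1+1 from rfl, iteratedDeriv_succ, iteratedDeriv_one] at this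
  have hv2' : ∀ y, |deriv (deriv v) y| ≤ M := by
    intro y; have := hv2 y
    rwa [show (2:ℕ) = 1+1 from rfl, iteratedDeriv_succ, iteratedDeriv_one] at this
  have hv3' : ∀ y, |deriv (deriv (deriv v)) y| ≤ M := by
    intro y; have := hv3 y
    rwa [show (3:ℕ) = 1+1+1 from rfl, iteratedDeriv_succ, iteratedDeriv_succ,
      iteratedDeriv_one] at this
  -- abbreviations
  set yp := y₀ + Δ / 2 with hyp
  set ym := y₀ - Δ / 2 with hym
  set A := (1 / Δ) * ∫ s in ym..yp, h s with hA
  set D := (h yp - h ym) / Δ with hD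
  -- rpow facts
  have hΔq0 : (0:ℝ) ≤ Δ ^ q := Real.rpow_nonneg hΔ.le q
  have hΔq1 : Δ ^ q ≤ 1 := Real.rpow_le_one hΔ.le hΔ1 (by linarith)
  have hqd : Δ ^ q = Δ ^ (q - 1) * Δ := by
    have : Δ ^ (q - 1) * Δ ^ (1:ℝ) = Δ ^ (q - 1 + 1) := (Real.rpow_add hΔ _ _).symm
    simp only [Real.rpow_one, sub_add_cancel] at this
    exact this.symm
  have hq10 : (0:ℝ) ≤ Δ ^ (q - 1) := Real.rpow_nonneg hΔ.le _
  -- Taylor facts for v around y₀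
  have tv1P := taylor1_abs v hvd hvd1 hv2' y₀ (Δ / 2)
  have tv1M := taylor1_abs v hvd hvd1 hv2' y₀ (-(Δ / 2))
  rw [show y₀ + -(Δ/2) = ym by rw [hym]; ring, show (-(Δ/2))^2 = (Δ/2)^2 by ring] at tv1M
  have th1P := taylor1_abs h hhd hhd1 hh2' y₀ (Δ / 2)
  have th1M := taylor1_abs h hhd hhd1 hh2' y₀ (-(Δ / 2))
  rw [show y₀ + -(Δ/2) = ym by rw [hym]; ring, show (-(Δ/2))^2 = (Δ/2)^2 by ring] at th1M
  have tv2P := taylor2_abs v hvd hvd1 hvd2 hv3' y₀ (Δ / 2)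
  have tv2M := taylor2_abs v hvd hvd1 hvd2 hv3' y₀ (-(Δ / 2))
  rw [show y₀ + -(Δ/2) = ym by rw [hym]; ring, show (-(Δ/2))^2 = (Δ/2)^2 by ring,
    show |(-(Δ/2))| = Δ/2 by rw [abs_neg]; exact abs_of_nonneg (by linarith)] at tv2M
  rw [show |Δ/2| = Δ/2 from abs_of_nonneg (by linarith)] at tv2P
  rw [← hyp] at tv1P th1P tv2P
  -- midpoint bounds
  have Bv3 : |(v yp + v ym) / 2 - v y₀| ≤ M * (Δ/2)^2 := by
    rw [abs_le] at tv1P tv1M ⊢; constructor <;> [linarith; linarith]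
  have Bh3 : |(h yp + h ym) / 2 - h y₀| ≤ M * (Δ/2)^2 := by
    rw [abs_le] at th1P th1M ⊢; constructor <;> [linarith; linarith]
  have B5 : |v yp - v ym - Δ * deriv v y₀| ≤ 2 * (M * (Δ/2)^2 * (Δ/2)) := by
    rw [abs_le] at tv2P tv2M ⊢; constructor <;> [linarith; linarith]
  -- MVT bounds
  have BD : |D| ≤ M := by
    rw [hD, abs_div, abs_of_pos hΔ, div_le_iff₀ hΔ]
    have := mvt_abs h hhd hh1 ym yp
    rw [show yp - ym = Δ by rw [hyp, hym]; ring, abs_of_pos hΔ] at this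
    exact this
  have Bw : |(v yp - v ym) / Δ| ≤ M := by
    rw [abs_div, abs_of_pos hΔ, div_le_iff₀ hΔ]
    have := mvt_abs v hvd hv1 ym yp
    rw [show yp - ym = Δ by rw [hyp, hym]; ring, abs_of_pos hΔ] at this
    exact this
  -- integral bounds
  have hInt := avg_near h hhd.continuous hhd hhd1 hh2' y₀ (Δ/2) (by linarith)
  rw [show 2 * (Δ/2) = Δ by ring] at hInt
  have BA : |A| ≤ M := by
    rw [hA, abs_mul, abs_of_pos (by positivity : (0:ℝ) < 1/Δ)]
    rw [show (1/Δ) * |∫ s in ym..yp, h s| = |∫ s in ym..yp, h s| / Δ by ring,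
      div_le_iff₀ hΔ]
    have := intervalIntegral.norm_integral_le_of_norm_le_const
      (C := M) (f := h) (a := ym) (b := yp) (fun s _ => hh0 s)
    rw [Real.norm_eq_abs, show yp - ym = Δ by rw [hyp, hym]; ring, abs_of_pos hΔ] at this
    exact this
  have BAy : |A - h y₀| ≤ M * (Δ/2)^2 := by
    have e : A - h y₀ = ((∫ s in ym..yp, h s) - Δ * h y₀) / Δ := by
      rw [hA]; field_simp
    rw [e, abs_div, abs_of_pos hΔ, div_le_iff₀ hΔ]
    calc |(∫ s in ym..yp, h s) - Δ * h y₀| ≤ M * (Δ/2)^2 * Δ := by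
          rw [show Δ * h y₀ = Δ * h y₀ by rfl]
          have := hInt
          rw [show Δ * h y₀ = Δ * h y₀ from rfl] at this
          calc |(∫ s in ym..yp, h s) - Δ * h y₀|
              = |(∫ s in (y₀ - Δ/2)..(y₀ + Δ/2), h s) - Δ * h y₀| := by rw [hym, hyp]
            _ ≤ M * (Δ/2)^2 * Δ := this
      _ = M * (Δ/2)^2 * Δ := rfl
  -- accuracy bounds for the products
  have hvtP : |vtilP| ≤ M + C := by
    have : |vtilP| ≤ |vtilP - v yp| + |v yp| := by
      calc |vtilP| = |(vtilP - v yp) + v yp| := by rw [sub_add_cancel]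
        _ ≤ |vtilP - v yp| + |v yp| := abs_add_le _ _
    have hCq : C * Δ ^ q ≤ C * 1 := mul_le_mul_of_nonneg_left hΔq1 hC
    linarith [hv0 yp]
  have hvtM : |vtilM| ≤ M + C := by
    have : |vtilM| ≤ |vtilM - v ym| + |v ym| := by
      calc |vtilM| = |(vtilM - v ym) + v ym| := by rw [sub_add_cancel]
        _ ≤ |vtilM - v ym| + |v ym| := abs_add_le _ _
    have hCq : C * Δ ^ q ≤ C * 1 := mul_le_mul_of_nonneg_left hΔq1 hC
    linarith [hv0 ym]
  have e1 : |vtilP * uhatP - v yp * h yp| ≤ (M + C) * (C * Δ ^ 3) + (C * Δ ^ q) * M := by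
    calc |vtilP * uhatP - v yp * h yp|
        = |vtilP * (uhatP - h yp) + (vtilP - v yp) * h yp| := by ring_nf
      _ ≤ |vtilP * (uhatP - h yp)| + |(vtilP - v yp) * h yp| := abs_add_le _ _
      _ = |vtilP| * |uhatP - h yp| + |vtilP - v yp| * |h yp| := by rw [abs_mul, abs_mul]
      _ ≤ (M + C) * (C * Δ ^ 3) + (C * Δ ^ q) * M :=
          add_le_add (mul_le_mul hvtP eP (abs_nonneg _) (by linarith))
            (mul_le_mul fP (hh0 yp) (abs_nonneg _) (by positivity))
  have e2 : |vtilM * uhatM - v ym * h ym| ≤ (M + C) * (C * Δ ^ 3) + (C * Δ ^ q) * M := by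
    calc |vtilM * uhatM - v ym * h ym|
        = |vtilM * (uhatM - h ym) + (vtilM - v ym) * h ym| := by ring_nf
      _ ≤ |vtilM * (uhatM - h ym)| + |(vtilM - v ym) * h ym| := abs_add_le _ _
      _ = |vtilM| * |uhatM - h ym| + |vtilM - v ym| * |h ym| := by rw [abs_mul, abs_mul]
      _ ≤ (M + C) * (C * Δ ^ 3) + (C * Δ ^ q) * M :=
          add_le_add (mul_le_mul hvtM eM (abs_nonneg _) (by linarith))
            (mul_le_mul fM (hh0 ym) (abs_nonneg _) (by positivity))
  have H1 : |(vtilP * uhatP - v yp * h yp) / Δ| ≤ (M + C) * C * Δ ^ 2 + C * M * Δ ^ (q - 1) := by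
    rw [abs_div, abs_of_pos hΔ, div_le_iff₀ hΔ]
    calc |vtilP * uhatP - v yp * h yp| ≤ (M + C) * (C * Δ ^ 3) + (C * Δ ^ q) * M := e1
      _ = ((M + C) * C * Δ ^ 2 + C * M * Δ ^ (q - 1)) * Δ := by rw [hqd]; ring
  have H2 : |(vtilM * uhatM - v ym * h ym) / Δ| ≤ (M + C) * C * Δ ^ 2 + C * M * Δ ^ (q - 1) := by
    rw [abs_div, abs_of_pos hΔ, div_le_iff₀ hΔ]
    calc |vtilM * uhatM - v ym * h ym| ≤ (M + C) * (C * Δ ^ 3) + (C * Δ ^ q) * M := e2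
      _ = ((M + C) * C * Δ ^ 2 + C * M * Δ ^ (q - 1)) * Δ := by rw [hqd]; ring
  have H3 : |D * ((v yp + v ym) / 2 - v y₀)| ≤ M * (M * (Δ/2)^2) := by
    rw [abs_mul]; exact mul_le_mul BD Bv3 (abs_nonneg _) hM
  have Hmid : |(h yp + h ym) / 2 - A| ≤ 2 * (M * (Δ/2)^2) := by
    calc |(h yp + h ym) / 2 - A| ≤ |(h yp + h ym) / 2 - h y₀| + |h y₀ - A| := abs_sub_le _ _ _
      _ ≤ M * (Δ/2)^2 + M * (Δ/2)^2 := add_le_add Bh3 (by rw [abs_sub_comm]; exact BAy)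
      _ = 2 * (M * (Δ/2)^2) := by ring
  have H4 : |((h yp + h ym) / 2 - A) * ((v yp - v ym) / Δ)| ≤ 2 * (M * (Δ/2)^2) * M := by
    rw [abs_mul]; exact mul_le_mul Hmid Bw (abs_nonneg _) (by positivity)
  have H5b : |(v yp - v ym) / Δ - deriv v y₀| ≤ M * (Δ/2)^2 := by
    have e : (v yp - v ym) / Δ - deriv v y₀ = (v yp - v ym - Δ * deriv v y₀) / Δ := by
      field_simp
    rw [e, abs_div, abs_of_pos hΔ, div_le_iff₀ hΔ]
    calc |v yp - v ym - Δ * deriv v y₀| ≤ 2 * (M * (Δ/2)^2 * (Δ/2)) := B5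
      _ = M * (Δ/2)^2 * Δ := by ring
  have H5 : |A * ((v yp - v ym) / Δ - deriv v y₀)| ≤ M * (M * (Δ/2)^2) := by
    rw [abs_mul]; exact mul_le_mul BA H5b (abs_nonneg _) hM
  -- main decomposition
  have key : (vtilP * uhatP - vtilM * uhatM) / Δ - (D * v y₀ + A * deriv v y₀)
      = (vtilP * uhatP - v yp * h yp) / Δ - (vtilM * uhatM - v ym * h ym) / Δ
        + D * ((v yp + v ym) / 2 - v y₀)
        + ((h yp + h ym) / 2 - A) * ((v yp - v ym) / Δ)
        + A * ((v yp - v ym) / Δ - deriv v y₀) := by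
    rw [hD]; field_simp; ring
  calc |(vtilP * uhatP - vtilM * uhatM) / Δ - (D * v y₀ + A * deriv v y₀)|
      ≤ |(vtilP * uhatP - v yp * h yp) / Δ| + |(vtilM * uhatM - v ym * h ym) / Δ|
        + |D * ((v yp + v ym) / 2 - v y₀)|
        + |((h yp + h ym) / 2 - A) * ((v yp - v ym) / Δ)|
        + |A * ((v yp - v ym) / Δ - deriv v y₀)| := by rw [key]; exact abs_add5 _ _ _ _ _
    _ ≤ (2 * (M + C) * C + 2 * C * M + M ^ 2) * (Δ ^ 2 + Δ ^ (q - 1)) := by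
        have n1 : 0 ≤ M * C * Δ ^ 2 := mul_nonneg (mul_nonneg hM hC) (sq_nonneg Δ)
        have n2 : 0 ≤ M * C * Δ ^ (q - 1) := mul_nonneg (mul_nonneg hM hC) hq10
        have n3 : 0 ≤ C * C * Δ ^ (q - 1) := mul_nonneg (mul_nonneg hC hC) hq10
        have n4 : 0 ≤ M * M * Δ ^ (q - 1) := mul_nonneg (mul_nonneg hM hM) hq10
        linarith [H1, H2, H3, H4, H5]
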